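/- Modifying each rectangle's cost from c(R) to c'(R) = c(R) + (ε/|W(R)|)·c(R_1(R)), where W(R) is the row of R and R_1(R) its first rectangle, increases the cost of any feasible solution (one that selects a prefix of every row) by at most a factor 1 + ε. -/
import Mathlib


/-- Modifying each rectangle's cost from `c i k` to `c i k + (ε/len i)·c i 0`
increases the cost of any prefix solution by at most a factor `1 + ε`. -/
theorem stmt18 {ι : Type*} (I : Finset ι) (ε : ℝ) (hε : 0 < ε)
    (len sel : ι → ℕ) (c : ι → ℕ → ℝ)
    (hlen : ∀ i ∈ I, 1 ≤ len i) (hsel : ∀ i ∈ I, sel i ≤ len i)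
    (hc0 : ∀ i ∈ I, 0 < c i 0) (hck : ∀ i ∈ I, ∀ k, 0 ≤ c i k) :
    ∑ i ∈ I, ∑ k ∈ Finset.range (sel i), (c i k + (ε / (len i : ℝ)) * c i 0)
      ≤ (1 + ε) * ∑ i ∈ I, ∑ k ∈ Finset.range (sel i), c i k := by
  rw [Finset.mul_sum]
  refine Finset.sum_le_sum fun i hi => ?_
  rw [Finset.sum_add_distrib, Finset.sum_const, Finset.card_range, nsmul_eq_mul]
  have hlenpos : (0:ℝ) < len i := by exact_mod_cast hlen i hi
  rcases Nat.eq_zero_or_pos (sel i) with h | h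
  · simp [h]
  · have hsum0 : c i 0 ≤ ∑ k ∈ Finset.range (sel i), c i k := by
      have := Finset.single_le_sum (f := fun k => c i k)
        (fun k _ => hck i hi k) (Finset.mem_range.mpr h)
      simpa using this
    have hratio : (sel i : ℝ) / len i ≤ 1 := by
      rw [div_le_one hlenpos]
      exact_mod_cast hsel i hi
    have : (sel i : ℝ) * (ε / len i * c i 0) ≤ ε * ∑ k ∈ Finset.range (sel i), c i k := by
      calc (sel i : ℝ) * (ε / len i * c i 0) = ((sel i : ℝ) / len i) * (ε * c i 0) := by ring
        _ ≤ 1 * (ε * c i 0) := by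
            apply mul_le_mul_of_nonneg_right hratio
            exact mul_nonneg hε.le (hc0 i hi).le
        _ = ε * c i 0 := one_mul _
        _ ≤ ε * ∑ k ∈ Finset.range (sel i), c i k :=
            mul_le_mul_of_nonneg_left hsum0 hε.le
    linarith [this]
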